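/- Let 1 ≤ p < ∞ and let w = (w_n)_{n≥1} be a normalized nonincreasing bi-regular weight (w_1 = 1, w_{n+1} ≤ w_n for all n, and both w and its conjugate weight w* are regular). Then w ∈ 𝒲 (i.e., lim_n w_n = 0 and ∑_n w_n = ∞), and the canonical basis of g(w,p) is not a symmetric basis: there is no constant C ≥ 1 such that for every permutation σ of ℕ and all finitely supported scalars (a_n), ‖∑ a_n g_{σ(n)}‖_{g(w,p)} ≤ C‖∑ a_n g_n‖_{g(w,p)}. -/

import Mathlib

open Filter Function Set
open scoped ENNReal NNReal Topology

noncomputable section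

/-- The Garling norm of a real sequence, with values in `ℝ≥0∞`:
`‖f‖_{g(w,p)} = sup_φ (∑ n, |f (φ n)|^p · w n)^{1/p}`, the supremum being taken over all
strictly increasing maps `φ : ℕ → ℕ`. -/
def garNorm (w : ℕ → ℝ) (p : ℝ) (f : ℕ → ℝ) : ℝ≥0∞ :=
  ⨆ φ : {φ : ℕ → ℕ // StrictMono φ},
    (∑' n, ENNReal.ofReal (|f (φ.1 n)| ^ p * w n)) ^ (1 / p)

/-- `w ∈ 𝒲`: a normalized, nonincreasing, positive weight tending to zero and non-summable.
(Sequences are indexed from `0`, so `w 0` is the paper's `w₁`.) -/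
structure IsGarlingWeight (w : ℕ → ℝ) : Prop where
  pos : ∀ n, 0 < w n
  first : w 0 = 1
  antitone : ∀ n, w (n + 1) ≤ w n
  tendsto_zero : Tendsto w atTop (𝓝 0)
  not_summable : ¬ Summable w

/-- A weight `w` is regular if `sup_m (1/(m w_m)) ∑_{n=1}^m w_n < ∞`.
(Sequences are indexed from `0`, so the paper's `w_m` is `w (m-1)`.) -/
def IsRegularWeight (w : ℕ → ℝ) : Prop :=
  ∃ C : ℝ, 0 < C ∧ ∀ m : ℕ, ∑ n ∈ Finset.range (m + 1), w n ≤ C * (((m : ℝ) + 1) * w m)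

/-- The conjugate weight `w*` of `w`, given by `w*_n = 1/(n w_n)`. -/
def conjWeight (w : ℕ → ℝ) : ℕ → ℝ := fun n => 1 / (((n : ℝ) + 1) * w n)

/-- **Statement 19.** If `w` is a normalized nonincreasing bi-regular weight (both `w` and its
conjugate weight `w*` are regular), then `w ∈ 𝒲` (i.e. additionally `w_n → 0` and
`∑ w_n = ∞`), and the canonical basis of `g(w,p)` is not symmetric: there is no constant
`C ≥ 1` such that `‖∑ a_n g_{σ(n)}‖_{g(w,p)} ≤ C ‖∑ a_n g_n‖_{g(w,p)}` for every permutation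
`σ` of `ℕ` and all finitely supported scalars `(a_n)`. -/
theorem garling_biregular_not_symmetric (p : ℝ) (hp : 1 ≤ p)
    (w : ℕ → ℝ) (hpos : ∀ n, 0 < w n) (hfirst : w 0 = 1)
    (hanti : ∀ n, w (n + 1) ≤ w n)
    (hreg : IsRegularWeight w) (hreg' : IsRegularWeight (conjWeight w)) :
    IsGarlingWeight w ∧
    ¬ ∃ C : ℝ, 1 ≤ C ∧
        ∀ (σ : Equiv.Perm ℕ) (a : ℕ → ℝ) (s : Finset ℕ),
          garNorm w p (fun i => if σ.symm i ∈ s then a (σ.symm i) else 0)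
            ≤ ENNReal.ofReal C * garNorm w p (fun i => if i ∈ s then a i else 0) := by
  obtain ⟨Cr, hCr, hr⟩ := hreg
  obtain ⟨C', hC', hr'⟩ := hreg'
  have hwanti : Antitone w := antitone_nat_of_succ_le hanti
  have hwle1 : ∀ n, w n ≤ 1 := fun n => hfirst ▸ hwanti (Nat.zero_le n)
  have hp0 : (0:ℝ) < p := lt_of_lt_of_le one_pos hp
  have hpne : p ≠ 0 := hp0.ne'
  have h1p : (0:ℝ) < 1/p := by positivity
  -- partial sums
  set S : ℕ → ℝ := fun m => ∑ n ∈ Finset.range m, w n with hSdef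
  have hSpos : ∀ m, 0 < m → 0 < S m := by
    intro m hm
    exact Finset.sum_pos (fun i _ => hpos i) (Finset.nonempty_range_iff.mpr (by omega))
  have hSmono : Monotone S := by
    intro x y hxy
    exact Finset.sum_le_sum_of_subset_of_nonneg (Finset.range_subset_range.mpr hxy)
      (fun i _ _ => (hpos i).le)
  have hSlow : ∀ i : ℕ, ((i:ℝ) + 1) * w i ≤ S (i + 1) := by
    intro i
    have h : ∑ _n ∈ Finset.range (i+1), w i ≤ ∑ n ∈ Finset.range (i+1), w n :=
      Finset.sum_le_sum (fun n hn => hwanti (Nat.lt_succ_iff.mp (Finset.mem_range.mp hn)))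
    simpa [mul_comm] using h
  -- Part A : tendsto zero
  set H : ℕ → ℝ := fun m => ∑ i ∈ Finset.range m, (1 / ((i:ℝ) + 1)) with hHdef
  have hHtop : Tendsto H atTop atTop := Real.tendsto_sum_range_one_div_nat_succ_atTop
  have hHpos : ∀ m, 0 < H (m + 1) := by
    intro m
    apply Finset.sum_pos
    · intro i _; positivity
    · exact ⟨0, Finset.mem_range.mpr (Nat.succ_pos m)⟩
  have hbound : ∀ m, w m ≤ C' / H (m + 1) := by
    intro m
    have h2 : ∀ n ∈ Finset.range (m + 1), (1 / ((n:ℝ) + 1)) ≤ conjWeight w n := by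
      intro n _
      have h3 : ((n:ℝ) + 1) * w n ≤ ((n:ℝ) + 1) := by
        nlinarith [hwle1 n, hpos n, (Nat.cast_nonneg n : (0:ℝ) ≤ n)]
      have h4 : (0:ℝ) < ((n:ℝ)+1) * w n := by have := hpos n; positivity
      exact one_div_le_one_div_of_le h4 h3
    have h6 : C' * (((m:ℝ) + 1) * conjWeight w m) = C' / w m := by
      unfold conjWeight
      have := (hpos m).ne'
      field_simp
    have h1 : H (m + 1) ≤ C' / w m := h6 ▸ (Finset.sum_le_sum h2).trans (hr' m)
    have h7 : H (m + 1) * w m ≤ C' := (le_div_iff₀ (hpos m)).mp h1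
    rw [le_div_iff₀ (hHpos m)]
    nlinarith
  have htend : Tendsto w atTop (𝓝 0) := by
    apply squeeze_zero (fun m => (hpos m).le) hbound
    exact Tendsto.div_atTop tendsto_const_nhds (hHtop.comp (tendsto_add_atTop_nat 1))
  -- Part A : not summable
  have hnotsum : ¬ Summable w := by
    intro hsum
    have hlb : ∀ m : ℕ, 1 / (Cr * ((m:ℝ) + 1)) ≤ w m := by
      intro m
      have h1 : (1:ℝ) ≤ ∑ n ∈ Finset.range (m + 1), w n := by
        calc (1:ℝ) = w 0 := hfirst.symm
        _ ≤ ∑ n ∈ Finset.range (m + 1), w n := by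
            apply Finset.single_le_sum (fun i _ => (hpos i).le)
            exact Finset.mem_range.mpr (Nat.succ_pos m)
      have h2 : (1:ℝ) ≤ Cr * (((m:ℝ) + 1) * w m) := h1.trans (hr m)
      rw [div_le_iff₀ (by positivity)]
      nlinarith [hpos m]
    have hs2 : Summable (fun m : ℕ => 1 / (Cr * ((m:ℝ) + 1))) :=
      Summable.of_nonneg_of_le (fun m => by positivity) hlb hsum
    have hs3 : Summable (fun m : ℕ => 1 / ((m:ℝ) + 1)) := by
      have hmul := hs2.mul_left Cr
      convert hmul using 2 with m
      · rfl
      rw [mul_one_div, div_mul_eq_div_div, div_self hCr.ne']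
    exact not_tendsto_atTop_of_tendsto_nhds hs3.hasSum.tendsto_sum_nat hHtop
  refine ⟨⟨hpos, hfirst, hanti, htend, hnotsum⟩, ?_⟩
  -- Part B
  rintro ⟨C, hC1, hsym⟩
  have hC0 : (0:ℝ) < C := lt_of_lt_of_le one_pos hC1
  -- the key combinatorial estimate
  have key_sum : ∀ k : ℕ, ∑ n ∈ Finset.range k, w n / S (k - n) ≤ 1 + C' := by
    intro k
    rcases Nat.eq_zero_or_pos k with hk0 | hk1
    · simp [hk0]; positivity
    set t := k / 2 with ht
    have hrefl : ∑ n ∈ Finset.range k, w n / S (k - n)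
        = ∑ i ∈ Finset.range k, w (k - 1 - i) / S (k - (k - 1 - i)) :=
      (Finset.sum_range_reflect (fun n => w n / S (k - n)) k).symm
    have hstep : ∀ i ∈ Finset.range k,
        w (k - 1 - i) / S (k - (k - 1 - i)) = w (k - 1 - i) / S (i + 1) := by
      intro i hi
      have := Finset.mem_range.mp hi
      congr 2
      omega
    rw [hrefl, Finset.sum_congr rfl hstep]
    have hsplit : ∑ i ∈ Finset.range k, w (k - 1 - i) / S (i + 1)
        = ∑ i ∈ Finset.range t, w (k - 1 - i) / S (i + 1)
          + ∑ i ∈ Finset.Ico t k, w (k - 1 - i) / S (i + 1) := by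
      rw [Finset.range_eq_Ico, ← Finset.sum_Ico_consecutive _ (Nat.zero_le t) (Nat.div_le_self k 2), ← Finset.range_eq_Ico]
    rw [hsplit]
    have part2 : ∑ i ∈ Finset.Ico t k, w (k - 1 - i) / S (i + 1) ≤ 1 := by
      have h1 : ∀ i ∈ Finset.Ico t k, w (k - 1 - i) / S (i + 1) ≤ w (k - 1 - i) / S (t + 1) := by
        intro i hi
        have hi' := Finset.mem_Ico.mp hi
        exact div_le_div_of_nonneg_left (hpos _).le (hSpos _ (by omega)) (hSmono (by omega))
      calc ∑ i ∈ Finset.Ico t k, w (k - 1 - i) / S (i + 1)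
          ≤ ∑ i ∈ Finset.Ico t k, w (k - 1 - i) / S (t + 1) := Finset.sum_le_sum h1
        _ = (∑ i ∈ Finset.Ico t k, w (k - 1 - i)) / S (t + 1) := by rw [Finset.sum_div]
        _ ≤ 1 := by
            rw [div_le_one (hSpos _ (by omega))]
            have h2 : ∑ i ∈ Finset.Ico t k, w (k - 1 - i)
                = ∑ j ∈ Finset.range (k - t), w (k - 1 - (t + j)) :=
              Finset.sum_Ico_eq_sum_range _ t k
            have h3 : ∀ j ∈ Finset.range (k - t), w (k - 1 - (t + j)) = w ((k - t) - 1 - j) := by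
              intro j hj; congr 1; omega
            have h4 : ∑ j ∈ Finset.range (k - t), w ((k - t) - 1 - j) = S (k - t) :=
              Finset.sum_range_reflect w (k - t)
            rw [h2, Finset.sum_congr rfl h3, h4]
            exact hSmono (by omega)
    have part1 : ∑ i ∈ Finset.range t, w (k - 1 - i) / S (i + 1) ≤ C' := by
      rcases Nat.eq_zero_or_pos t with ht0 | ht1
      · simp [ht0]; positivity
      have h1 : ∀ i ∈ Finset.range t, w (k - 1 - i) / S (i + 1) ≤ w t * conjWeight w i := by
        intro i hi
        have hi' := Finset.mem_range.mp hi
        have hnum : w (k - 1 - i) ≤ w t := hwanti (by omega)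
        have hden : ((i:ℝ) + 1) * w i ≤ S (i + 1) := hSlow i
        have hdpos : (0:ℝ) < ((i:ℝ) + 1) * w i := by have := hpos i; positivity
        calc w (k - 1 - i) / S (i + 1) ≤ w t / (((i:ℝ) + 1) * w i) :=
              div_le_div₀ (hpos t).le hnum hdpos hden
          _ = w t * conjWeight w i := by unfold conjWeight; rw [mul_one_div]
      calc ∑ i ∈ Finset.range t, w (k - 1 - i) / S (i + 1)
          ≤ ∑ i ∈ Finset.range t, w t * conjWeight w i := Finset.sum_le_sum h1
        _ = w t * ∑ i ∈ Finset.range t, conjWeight w i := by rw [Finset.mul_sum]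
        _ ≤ w t * (C' / w (t - 1)) := by
            apply mul_le_mul_of_nonneg_left _ (hpos t).le
            have h5 := hr' (t - 1)
            have ht1' : (t - 1) + 1 = t := by omega
            rw [ht1'] at h5
            have h6 : C' * (((t - 1 : ℕ):ℝ) + 1) * conjWeight w (t - 1) = C' / w (t - 1) := by
              unfold conjWeight
              have := (hpos (t-1)).ne'
              have hc : (((t-1:ℕ):ℝ) + 1) ≠ 0 := by positivity
              field_simp
            calc ∑ i ∈ Finset.range t, conjWeight w i
                ≤ C' * ((((t-1:ℕ)):ℝ) + 1) * conjWeight w (t - 1) := by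
                  rw [mul_assoc]; exact h5
              _ = C' / w (t - 1) := h6
        _ ≤ C' := by
            rw [← mul_div_assoc, div_le_iff₀ (hpos (t-1))]
            nlinarith [hwanti (show t - 1 ≤ t by omega), hpos t, hpos (t-1)]
    linarith [part1, part2]
  -- choose m large
  have hStop : Tendsto S atTop atTop :=
    (not_summable_iff_tendsto_nat_atTop_of_nonneg (fun n => (hpos n).le)).mp hnotsum
  have hCp : (0:ℝ) < C ^ p * (1 + C') := by
    have := Real.rpow_pos_of_pos hC0 p
    nlinarith
  obtain ⟨m, hm⟩ : ∃ m, C ^ p * (1 + C') < Real.log (S (m+1)) := by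
    have h := (Real.tendsto_log_atTop.comp (hStop.comp (tendsto_add_atTop_nat 1))).eventually_gt_atTop
      (C ^ p * (1 + C'))
    exact h.exists
  -- the vector and the permutation
  set a : ℕ → ℝ := fun n => (S (m - n)) ^ (-(1/p) : ℝ) with ha
  have hinv : Function.Involutive (fun i => if i < m then m - 1 - i else i) := by
    intro i; dsimp only; split_ifs <;> omega
  set σ : Equiv.Perm ℕ := hinv.toPerm _ with hσdef
  have hσ : ∀ i, σ.symm i = if i < m then m - 1 - i else i := fun i => rfl
  -- the rearranged vector in clean form
  set fclean : ℕ → ℝ := fun i => if i < m then (S (i+1)) ^ (-(1/p) : ℝ) else 0 with hfc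
  have hfun : (fun i => if σ.symm i ∈ Finset.range m then a (σ.symm i) else 0) = fclean := by
    funext i
    rw [hσ i]
    by_cases h : i < m
    · rw [if_pos h]
      rw [if_pos (by simp only [Finset.mem_range]; omega)]
      have harg : m - (m - 1 - i) = i + 1 := by omega
      simp only [ha, harg, hfc]
      rw [if_pos h]
    · rw [if_neg h]
      rw [if_neg (by simp only [Finset.mem_range]; omega)]
      simp only [hfc]
      rw [if_neg h]
  -- per-term computation of |x^(-1/p)|^p
  have hpow : ∀ x : ℝ, 0 < x → |x ^ (-(1/p) : ℝ)| ^ p = x⁻¹ := by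
    intro x hx
    rw [abs_of_nonneg (Real.rpow_nonneg hx.le _), ← Real.rpow_mul hx.le]
    have : (-(1/p)) * p = -1 := by field_simp
    rw [this, Real.rpow_neg_one]
  -- lower bound for the rearranged vector
  have hlog : Real.log (S (m+1)) ≤ ∑ n ∈ Finset.range m, w n / S (n+1) := by
    have htel := Finset.sum_range_sub (fun n => Real.log (S (n+1))) m
    have hS1 : S 1 = 1 := by simp [hSdef, hfirst]
    have hterm : ∀ n ∈ Finset.range m,
        Real.log (S (n+1+1)) - Real.log (S (n+1)) ≤ w n / S (n+1) := by
      intro n _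
      have h1 : 0 < S (n+1) := hSpos _ (by omega)
      have h2 : 0 < S (n+1+1) := hSpos _ (by omega)
      rw [← Real.log_div h2.ne' h1.ne']
      have h3 := Real.log_le_sub_one_of_pos (div_pos h2 h1)
      have h4 : S (n+1+1) = S (n+1) + w (n+1) := by
        simp [hSdef, Finset.sum_range_succ]
      have h5 : S (n+1+1) / S (n+1) - 1 = w (n+1) / S (n+1) := by
        rw [h4]; field_simp; ring
      have h6 : w (n+1) / S (n+1) ≤ w n / S (n+1) := by
        gcongr
        exact hanti n
      linarith
    calc Real.log (S (m+1))
        = ∑ n ∈ Finset.range m, (Real.log (S (n+1+1)) - Real.log (S (n+1))) := by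
          rw [htel, hS1, Real.log_one, sub_zero]
      _ ≤ ∑ n ∈ Finset.range m, w n / S (n+1) := Finset.sum_le_sum hterm
  have lower : ENNReal.ofReal (Real.log (S (m+1))) ^ (1/p) ≤ garNorm w p fclean := by
    have hle : ENNReal.ofReal (Real.log (S (m+1)))
        ≤ ∑' n, ENNReal.ofReal (|fclean (id n)| ^ p * w n) := by
      calc ENNReal.ofReal (Real.log (S (m+1)))
          ≤ ENNReal.ofReal (∑ n ∈ Finset.range m, w n / S (n+1)) :=
            ENNReal.ofReal_le_ofReal hlog
        _ = ∑ n ∈ Finset.range m, ENNReal.ofReal (w n / S (n+1)) :=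
            ENNReal.ofReal_sum_of_nonneg (fun n _ =>
              div_nonneg (hpos n).le (hSpos _ (by omega)).le)
        _ = ∑ n ∈ Finset.range m, ENNReal.ofReal (|fclean (id n)| ^ p * w n) := by
            apply Finset.sum_congr rfl
            intro n hn
            have hn' := Finset.mem_range.mp hn
            have hS0 : 0 < S (n+1) := hSpos _ (by omega)
            simp only [hfc, id_eq]
            rw [if_pos hn', hpow _ hS0]
            congr 1
            rw [inv_mul_eq_div]
        _ ≤ ∑' n, ENNReal.ofReal (|fclean (id n)| ^ p * w n) :=
            ENNReal.sum_le_tsum _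
    refine le_trans (ENNReal.rpow_le_rpow hle h1p.le) ?_
    exact le_iSup (fun φ : {φ : ℕ → ℕ // StrictMono φ} =>
      (∑' n, ENNReal.ofReal (|fclean (φ.1 n)| ^ p * w n)) ^ (1/p)) ⟨id, strictMono_id⟩
  -- upper bound for the original vector
  have upper : garNorm w p (fun i => if i ∈ Finset.range m then a i else 0)
      ≤ ENNReal.ofReal (1 + C') ^ (1/p) := by
    apply iSup_le
    rintro ⟨φ, hφ⟩
    apply ENNReal.rpow_le_rpow _ h1p.le
    have hex : ∃ n, m ≤ φ n := ⟨m, hφ.le_apply⟩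
    set k := Nat.find hex with hk
    have hk1 : m ≤ φ k := Nat.find_spec hex
    have hk2 : ∀ n, n < k → φ n < m := by
      intro n h
      have := Nat.find_min hex h
      omega
    have hadd : ∀ b d : ℕ, φ b + d ≤ φ (b + d) := by
      intro b d
      induction d with
      | zero => simp
      | succ e ih =>
        have := hφ (show b + e < b + (e + 1) by omega)
        omega
    have hkm : ∀ n, n < k → φ n + (k - n) ≤ m := by
      intro n hn
      have h1 := hadd n (k - 1 - n)
      have h2 : n + (k - 1 - n) = k - 1 := by omega
      rw [h2] at h1
      have h3 := hk2 (k - 1) (by omega)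
      omega
    have hzero : ∀ n ∉ Finset.range k,
        ENNReal.ofReal (|if φ n ∈ Finset.range m then a (φ n) else 0| ^ p * w n) = 0 := by
      intro n hn
      simp only [Finset.mem_range, not_lt] at hn
      have hnm : ¬ φ n ∈ Finset.range m := by
        simp only [Finset.mem_range, not_lt]
        exact hk1.trans (hφ.monotone hn)
      rw [if_neg hnm, abs_zero, Real.zero_rpow hpne, zero_mul, ENNReal.ofReal_zero]
    show (∑' n, ENNReal.ofReal (|if φ n ∈ Finset.range m then a (φ n) else 0| ^ p * w n))
        ≤ ENNReal.ofReal (1 + C')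
    rw [tsum_eq_sum hzero]
    have hterm : ∀ n ∈ Finset.range k,
        ENNReal.ofReal (|if φ n ∈ Finset.range m then a (φ n) else 0| ^ p * w n)
          = ENNReal.ofReal (w n / S (m - φ n)) := by
      intro n hn
      have hn' := Finset.mem_range.mp hn
      have hφn : φ n < m := hk2 n hn'
      rw [if_pos (Finset.mem_range.mpr hφn)]
      have hS0 : 0 < S (m - φ n) := hSpos _ (by omega)
      simp only [ha]
      rw [hpow _ hS0]
      congr 1
      rw [inv_mul_eq_div]
    rw [Finset.sum_congr rfl hterm,
      ← ENNReal.ofReal_sum_of_nonneg (fun n hn =>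
        div_nonneg (hpos n).le (hSpos _ (by
          have := hk2 n (Finset.mem_range.mp hn); omega)).le)]
    apply ENNReal.ofReal_le_ofReal
    calc ∑ n ∈ Finset.range k, w n / S (m - φ n)
        ≤ ∑ n ∈ Finset.range k, w n / S (k - n) := by
          apply Finset.sum_le_sum
          intro n hn
          have hn' := Finset.mem_range.mp hn
          have h1 := hkm n hn'
          exact div_le_div_of_nonneg_left (hpos n).le (hSpos _ (by omega))
            (hSmono (by omega))
      _ ≤ 1 + C' := key_sum k
  -- assemble the contradiction
  have hle := hsym σ a (Finset.range m)
  rw [hfun] at hle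
  have h3 : ENNReal.ofReal (Real.log (S (m+1))) ^ (1/p)
      ≤ ENNReal.ofReal C * ENNReal.ofReal (1 + C') ^ (1/p) :=
    lower.trans (hle.trans (mul_le_mul_right upper _))
  have h4 : ENNReal.ofReal C * ENNReal.ofReal (1 + C') ^ (1/p)
      = ENNReal.ofReal (C ^ p * (1 + C')) ^ (1/p) := by
    rw [ENNReal.ofReal_mul (by positivity : (0:ℝ) ≤ C ^ p),
      ENNReal.mul_rpow_of_nonneg _ _ h1p.le]
    congr 1
    rw [← ENNReal.ofReal_rpow_of_nonneg hC0.le hp0.le, ← ENNReal.rpow_mul,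
      mul_one_div_cancel hpne, ENNReal.rpow_one]
  have h5 : ENNReal.ofReal (C ^ p * (1 + C')) < ENNReal.ofReal (Real.log (S (m+1))) :=
    (ENNReal.ofReal_lt_ofReal_iff (hCp.trans hm)).mpr hm
  have h6 := ENNReal.rpow_lt_rpow h5 h1p
  exact lt_irrefl _ (lt_of_le_of_lt (h3.trans_eq h4) h6)
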